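/- arXiv:1805.09148 — 2 statements merged into one kernel-verified Lean document; each statement's English description precedes it below -/
import Mathlib

section
/- Let X ⊆ ℝ^n be nonempty, convex, and closed, and f : ℝ^n → ℝ be τ-strongly convex (τ > 0) and continuous. For λ ∈ ℝ^p define x(λ) = argmin_{x ∈ X} [f(x) + λᵀ(Ax - b)] (which is unique by strong convexity). Then the map λ ↦ x(λ) is Lipschitz continuous with constant ‖A‖/τ, where ‖A‖ is the operator norm of A. -/
open scoped RealInnerProductSpace

private lemma aux_le_of_forall {c d : ℝ} (h : ∀ t : ℝ, t ∈ Set.Ioo (0:ℝ) 1 → (1 - t) * c ≤ d) :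
    c ≤ d := by
  refine le_of_forall_pos_le_add fun ε hε => ?_
  rcases le_or_gt c 0 with hc | hc
  · have := h (1/2) (by norm_num)
    nlinarith
  · have ht : min (ε / c) (1/2) ∈ Set.Ioo (0:ℝ) 1 := by
      constructor
      · exact lt_min (div_pos hε hc) (by norm_num)
      · exact lt_of_le_of_lt (min_le_right _ _) (by norm_num)
    have h2 := h _ ht
    have h3 : min (ε / c) (1/2) ≤ ε / c := min_le_left _ _
    have h4 : min (ε / c) (1/2) * c ≤ ε := by
      rw [← le_div_iff₀ hc] at *
      exact h3
    nlinarith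

private lemma key_strong_min {n : ℕ} {X : Set (EuclideanSpace ℝ (Fin n))}
    (hXconv : Convex ℝ X) {g : EuclideanSpace ℝ (Fin n) → ℝ} {τ : ℝ}
    (hg : StrongConvexOn Set.univ τ g) {x : EuclideanSpace ℝ (Fin n)} (hx : x ∈ X)
    (hmin : ∀ z ∈ X, g x ≤ g z) :
    ∀ y ∈ X, τ / 2 * ‖x - y‖ ^ 2 ≤ g y - g x := by
  intro y hy
  refine aux_le_of_forall fun t ht => ?_
  have hz : (1 - t) • x + t • y ∈ X :=
    hXconv hx hy (by linarith [ht.2]) ht.1.le (by ring)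
  have h1 := hg.2 (Set.mem_univ x) (Set.mem_univ y)
    (by linarith [ht.2] : (0:ℝ) ≤ 1 - t) ht.1.le (by ring)
  have h2 := hmin _ hz
  simp only [smul_eq_mul] at h1
  have h3 : t * ((1 - t) * (τ / 2 * ‖x - y‖ ^ 2)) ≤ t * (g y - g x) := by nlinarith
  have := le_of_mul_le_mul_left h3 ht.1
  linarith

/-- The minimizer map `λ ↦ x(λ)` is Lipschitz with constant `‖A‖/τ`. -/
theorem stmt2 {n p : ℕ} (X : Set (EuclideanSpace ℝ (Fin n))) (hXne : X.Nonempty)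
    (hXconv : Convex ℝ X) (hXcl : IsClosed X)
    (f : EuclideanSpace ℝ (Fin n) → ℝ) (τ : ℝ) (hτ : 0 < τ)
    (hf : ConvexOn ℝ Set.univ (fun x => f x - τ / 2 * ‖x‖ ^ 2)) (hfc : Continuous f)
    (A : EuclideanSpace ℝ (Fin n) →L[ℝ] EuclideanSpace ℝ (Fin p))
    (b : EuclideanSpace ℝ (Fin p))
    (xmin : EuclideanSpace ℝ (Fin p) → EuclideanSpace ℝ (Fin n))
    (hmem : ∀ lam, xmin lam ∈ X)
    (hmin : ∀ lam, ∀ x ∈ X,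
      f (xmin lam) + ⟪A (xmin lam) - b, lam⟫ ≤ f x + ⟪A x - b, lam⟫) :
    ∀ lam mu, ‖xmin lam - xmin mu‖ ≤ ‖A‖ / τ * ‖lam - mu‖ := by
  -- the perturbed objective is strongly convex for every multiplier
  have hlin : ∀ lam : EuclideanSpace ℝ (Fin p),
      ConvexOn ℝ (Set.univ : Set (EuclideanSpace ℝ (Fin n))) (fun z => ⟪A z - b, lam⟫) := by
    intro lam
    refine ⟨convex_univ, fun x _ y _ a b' ha hb hab => le_of_eq ?_⟩
    simp only [map_add, map_smul, smul_eq_mul]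
    rw [inner_sub_left, inner_add_left, real_inner_smul_left, real_inner_smul_left,
      inner_sub_left, inner_sub_left]
    linear_combination (⟪b, lam⟫ : ℝ) * hab
  have hsc : ∀ lam : EuclideanSpace ℝ (Fin p),
      StrongConvexOn (Set.univ : Set (EuclideanSpace ℝ (Fin n))) τ
        (fun z => f z + ⟪A z - b, lam⟫) := by
    intro lam
    rw [strongConvexOn_iff_convex]
    have heq : (fun z : EuclideanSpace ℝ (Fin n) =>
        (f z + ⟪A z - b, lam⟫) - τ / 2 * ‖z‖ ^ 2)
        = fun z => (f z - τ / 2 * ‖z‖ ^ 2) + ⟪A z - b, lam⟫ := by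
      funext z; ring
    rw [heq]
    exact hf.add (hlin lam)
  intro lam mu
  set x := xmin lam with hxdef
  set y := xmin mu with hydef
  have h1 : τ / 2 * ‖x - y‖ ^ 2 ≤
      (f y + ⟪A y - b, lam⟫) - (f x + ⟪A x - b, lam⟫) :=
    key_strong_min hXconv (hsc lam) (hmem lam) (fun z hz => hmin lam z hz) y (hmem mu)
  have h2 : τ / 2 * ‖y - x‖ ^ 2 ≤
      (f x + ⟪A x - b, mu⟫) - (f y + ⟪A y - b, mu⟫) :=
    key_strong_min hXconv (hsc mu) (hmem mu) (fun z hz => hmin mu z hz) x (hmem lam)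
  have hnorm : ‖y - x‖ = ‖x - y‖ := norm_sub_rev y x
  have hsum : τ * ‖x - y‖ ^ 2 ≤ ⟪A y - A x, lam - mu⟫ := by
    have e : (⟪A y - A x, lam - mu⟫ : ℝ) =
        ((f y + ⟪A y - b, lam⟫) - (f x + ⟪A x - b, lam⟫)) +
        ((f x + ⟪A x - b, mu⟫) - (f y + ⟪A y - b, mu⟫)) := by
      simp only [inner_sub_left, inner_sub_right]
      ring
    rw [e]
    rw [hnorm] at h2
    linarith
  have hub : (⟪A y - A x, lam - mu⟫ : ℝ) ≤ ‖A‖ * ‖x - y‖ * ‖lam - mu‖ := by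
    calc (⟪A y - A x, lam - mu⟫ : ℝ) ≤ ‖A y - A x‖ * ‖lam - mu‖ := real_inner_le_norm _ _
    _ ≤ ‖A‖ * ‖x - y‖ * ‖lam - mu‖ := by
        have : A y - A x = A (y - x) := (map_sub A y x).symm
        rw [this]
        have h5 := A.le_opNorm (y - x)
        rw [hnorm] at h5
        exact mul_le_mul_of_nonneg_right h5 (norm_nonneg _)
  rcases eq_or_lt_of_le (norm_nonneg (x - y)) with h0 | h0
  · rw [← h0]
    positivity
  · rw [div_mul_eq_mul_div, le_div_iff₀ hτ, mul_comm]
    have h6 : τ * ‖x - y‖ ^ 2 ≤ ‖A‖ * ‖x - y‖ * ‖lam - mu‖ := le_trans hsum hub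
    nlinarith
end

section
/- Let h : ℝ^p → ℝ be γ-strongly concave (γ > 0) and differentiable with M-Lipschitz gradient. Let φ : ℝ^p → ℝ^p satisfy ‖φ(z)‖ ≤ c for all z. Define y = z + β(∇h(z) + φ(z)) with 0 < β ≤ γ/(8M²). Then there exists a compact set V ⊆ ℝ^p, depending only on c and h (not on β), such that ‖y‖ ≤ ‖z‖ whenever z ∉ V, and ‖y‖ ≤ R whenever z ∈ V, where R = max_{v ∈ V}{‖v‖ + (γ/(8M²))‖∇h(v)‖} + γc/(8M²). -/
open Set InnerProductSpace

lemma grad_antitone {E : Type*} [NormedAddCommGroup E] [InnerProductSpace ℝ E]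
    [CompleteSpace E] {F : E → ℝ} {F' : E → E}
    (hconc : ConcaveOn ℝ Set.univ F)
    (hgrad : ∀ z, HasGradientAt F (F' z) z) (x y : E) :
    (inner ℝ (F' x - F' y) (x - y) : ℝ) ≤ 0 := by
  set L : ℝ →ᵃ[ℝ] E := AffineMap.lineMap y x with hLdef
  have hψ : ConcaveOn ℝ Set.univ (F ∘ L) := by
    have h1 := hconc.comp_affineMap L
    simpa using h1
  have hd : ∀ t : ℝ, HasDerivAt (F ∘ L) (inner ℝ (F' (L t)) (x - y) : ℝ) t := by
    intro t
    have h1 : HasDerivAt (fun s : ℝ => L s) (x - y) t := by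
      simp only [hLdef, AffineMap.lineMap_apply, vsub_eq_sub, vadd_eq_add]
      simpa using ((hasDerivAt_id t).smul_const (x - y)).add_const y
    have h2 := (hgrad (L t)).hasFDerivAt.comp_hasDerivAt t h1
    simpa [Function.comp, InnerProductSpace.toDual_apply_apply] using h2
  have hanti := hψ.antitoneOn_deriv (fun t _ => (hd t).differentiableAt)
  have h01 := hanti (Set.mem_univ (0:ℝ)) (Set.mem_univ (1:ℝ)) zero_le_one
  rw [(hd 0).deriv, (hd 1).deriv] at h01
  have hL0 : L 0 = y := by simp [hLdef]
  have hL1 : L 1 = x := by simp [hLdef]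
  rw [hL0, hL1] at h01
  rw [inner_sub_left]; linarith

lemma hasGradientAt_half_sq {E : Type*} [NormedAddCommGroup E] [InnerProductSpace ℝ E]
    [CompleteSpace E] (γ : ℝ) (x : E) :
    HasGradientAt (fun z : E => γ / 2 * ‖z‖ ^ 2) (γ • x) x := by
  have heq : (fun z : E => γ / 2 * ‖z‖ ^ 2) = fun z : E => γ / 2 * (inner ℝ z z : ℝ) := by
    funext z; rw [real_inner_self_eq_norm_sq]
  have key : HasFDerivAt (fun z : E => γ / 2 * (inner ℝ z z : ℝ))
      (InnerProductSpace.toDual ℝ E (γ • x)) x := by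
    have h1 := (HasFDerivAt.inner ℝ (hasFDerivAt_id x) (hasFDerivAt_id x)).const_mul (γ/2)
    refine h1.congr_fderiv ?_
    ext v
    simp [InnerProductSpace.toDual_apply_apply, fderivInnerCLM_apply, real_inner_comm x v,
      real_inner_smul_left]
    ring
  rw [heq]
  exact hasGradientAt_iff_hasFDerivAt.mpr key

set_option maxHeartbeats 1000000 in
/-- Boundedness lemma for a regularized dual ascent step (Lemma 1). -/
theorem stmt3 {p : ℕ} (h : EuclideanSpace ℝ (Fin p) → ℝ) (γ M c : ℝ)
    (hγ : 0 < γ) (hM : 0 < M)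
    (hconc : ConcaveOn ℝ Set.univ (fun z => h z + γ / 2 * ‖z‖ ^ 2))
    (h' : EuclideanSpace ℝ (Fin p) → EuclideanSpace ℝ (Fin p))
    (hgrad : ∀ z, HasGradientAt h (h' z) z)
    (hlip : ∀ x y, ‖h' x - h' y‖ ≤ M * ‖x - y‖)
    (φ : EuclideanSpace ℝ (Fin p) → EuclideanSpace ℝ (Fin p))
    (hφ : ∀ z, ‖φ z‖ ≤ c) :
    ∃ V : Set (EuclideanSpace ℝ (Fin p)), IsCompact V ∧
      ∀ β : ℝ, 0 < β → β ≤ γ / (8 * M ^ 2) →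
        ∀ z, (z ∉ V → ‖z + β • (h' z + φ z)‖ ≤ ‖z‖) ∧
          (z ∈ V → ‖z + β • (h' z + φ z)‖ ≤
            sSup ((fun v => ‖v‖ + γ / (8 * M ^ 2) * ‖h' v‖) '' V) + γ * c / (8 * M ^ 2)) := by
  have hc : (0:ℝ) ≤ c := le_trans (norm_nonneg _) (hφ 0)
  obtain ⟨A, hAdef⟩ : ∃ A : ℝ, A = ‖h' (0:EuclideanSpace ℝ (Fin p))‖ + c := ⟨_, rfl⟩
  have hA0 : 0 ≤ A := by rw [hAdef]; positivity
  obtain ⟨K, hKdef⟩ : ∃ K : ℝ, K = γ * A^2 / (4 * M^2) := ⟨_, rfl⟩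
  have hK0 : 0 ≤ K := by rw [hKdef]; positivity
  obtain ⟨R₀, hRdef⟩ : ∃ R : ℝ, R = max 1 ((2*A + K)/γ) := ⟨_, rfl⟩
  have hR₀1 : (1:ℝ) ≤ R₀ := hRdef ▸ le_max_left _ _
  have hR₀2 : (2*A + K)/γ ≤ R₀ := hRdef ▸ le_max_right _ _
  refine ⟨Metric.closedBall 0 R₀, isCompact_closedBall _ _, ?_⟩
  have hgradF : ∀ z : EuclideanSpace ℝ (Fin p),
      HasGradientAt (fun z => h z + γ / 2 * ‖z‖ ^ 2) (h' z + γ • z) z := by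
    intro z
    have h1 := (hgrad z).hasFDerivAt
    have h2 := (hasGradientAt_half_sq γ z).hasFDerivAt
    rw [hasGradientAt_iff_hasFDerivAt, map_add]
    exact h1.add h2
  have hmono : ∀ z : EuclideanSpace ℝ (Fin p),
      (inner ℝ (h' z + φ z) z : ℝ) ≤ -(γ * ‖z‖^2) + A * ‖z‖ := by
    intro z
    have e1 := grad_antitone hconc hgradF z 0
    simp only [smul_zero, add_zero, sub_zero] at e1
    rw [inner_sub_left, inner_add_left, real_inner_smul_left,
      real_inner_self_eq_norm_sq] at e1
    have e2 : (inner ℝ (h' (0:EuclideanSpace ℝ (Fin p))) z : ℝ) ≤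
        ‖h' (0:EuclideanSpace ℝ (Fin p))‖ * ‖z‖ := real_inner_le_norm _ _
    have e3 : (inner ℝ (φ z) z : ℝ) ≤ c * ‖z‖ :=
      (real_inner_le_norm _ _).trans (mul_le_mul_of_nonneg_right (hφ z) (norm_nonneg _))
    rw [inner_add_left, hAdef]
    nlinarith
  have hgnorm : ∀ z : EuclideanSpace ℝ (Fin p), ‖h' z + φ z‖ ≤ M * ‖z‖ + A := by
    intro z
    have e1 : ‖h' z‖ ≤ ‖h' z - h' 0‖ + ‖h' (0:EuclideanSpace ℝ (Fin p))‖ := by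
      have := norm_add_le (h' z - h' 0) (h' 0); simpa using this
    have e2 := hlip z 0
    rw [sub_zero] at e2
    have e3 := norm_add_le (h' z) (φ z)
    have e4 := hφ z
    rw [hAdef]; linarith
  intro β hβ0 hβ2 z
  constructor
  · -- outside the ball
    intro hzV
    rw [Metric.mem_closedBall, dist_zero_right, not_le] at hzV
    obtain ⟨t, htdef⟩ : ∃ t : ℝ, t = ‖z‖ := ⟨_, rfl⟩
    obtain ⟨G, hGdef⟩ : ∃ G : ℝ, G = ‖h' z + φ z‖ := ⟨_, rfl⟩
    obtain ⟨ip, hipdef⟩ : ∃ ip : ℝ, ip = (inner ℝ z (h' z + φ z) : ℝ) := ⟨_, rfl⟩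
    have ht1 : 1 ≤ t := htdef ▸ le_trans hR₀1 hzV.le
    have htγ : 2*A + K ≤ γ * t := by
      rw [div_le_iff₀ hγ] at hR₀2
      have : R₀ ≤ t := htdef ▸ hzV.le
      nlinarith
    have hsq : ‖z + β • (h' z + φ z)‖^2 ≤ ‖z‖^2 := by
      have e0 : ‖z + β • (h' z + φ z)‖^2 = t^2 + 2 * (β * ip) + β^2 * G^2 := by
        rw [norm_add_sq_real, real_inner_smul_right, norm_smul]
        rw [Real.norm_eq_abs, abs_of_pos hβ0, htdef, hGdef, hipdef]
        ring
      rw [e0]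
      have hzn : ‖z‖^2 = t^2 := by rw [htdef]
      rw [hzn]
      have hin : ip ≤ -(γ * t^2) + A * t := by
        rw [hipdef, real_inner_comm, htdef]; exact hmono z
      have hgn : G ≤ M * t + A := by rw [hGdef, htdef]; exact hgnorm z
      have hgn0 : (0:ℝ) ≤ G := hGdef ▸ norm_nonneg _
      have s1 : β^2 * G^2 ≤ β^2 * (M*t+A)^2 := by
        have : G^2 ≤ (M*t+A)^2 := by nlinarith
        nlinarith [sq_nonneg β]
      have s2 : (M*t+A)^2 ≤ 2*M^2*t^2 + 2*A^2 := by nlinarith [sq_nonneg (M*t - A)]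
      have s3 : β^2 * (2*M^2*t^2 + 2*A^2) ≤ β * (γ * t^2 / 4 + K) := by
        have hb : β * β ≤ β * (γ / (8*M^2)) := mul_le_mul_of_nonneg_left hβ2 hβ0.le
        have hM2 : (0:ℝ) < M^2 := by positivity
        have hnn : (0:ℝ) ≤ 2*M^2*t^2 + 2*A^2 := by positivity
        have key : β * (γ / (8*M^2)) * (2*M^2*t^2 + 2*A^2) = β * (γ * t^2 / 4 + K) := by
          rw [hKdef]; field_simp; ring
        calc β^2 * (2*M^2*t^2 + 2*A^2) = (β*β) * (2*M^2*t^2 + 2*A^2) := by ring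
          _ ≤ (β * (γ / (8*M^2))) * (2*M^2*t^2 + 2*A^2) := mul_le_mul_of_nonneg_right hb hnn
          _ = β * (γ * t^2 / 4 + K) := key
      have c1 : 2 * (β * ip) ≤ 2 * β * (-(γ * t^2) + A * t) := by
        have := mul_le_mul_of_nonneg_left hin hβ0.le
        nlinarith
      have c2 : β^2 * G^2 ≤ β * (γ * t^2 / 4 + K) := by
        have m1 : β^2 * (M*t+A)^2 ≤ β^2 * (2*M^2*t^2 + 2*A^2) :=
          mul_le_mul_of_nonneg_left s2 (sq_nonneg β)
        linarith
      have c3 : 2 * β * (-(γ * t^2) + A * t) + β * (γ * t^2 / 4 + K) ≤ 0 := by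
        have hq : -(γ * t^2) + 2 * A * t + K ≤ 0 := by
          nlinarith [mul_le_mul_of_nonneg_right htγ (by linarith : (0:ℝ) ≤ t),
            mul_le_mul_of_nonneg_left ht1 hK0]
        have hq2 : β * (-(γ * t^2) + 2 * A * t + K) ≤ β * 0 :=
          mul_le_mul_of_nonneg_left hq hβ0.le
        rw [mul_zero] at hq2
        have hq3 : 0 ≤ β * (γ * t^2) := by positivity
        nlinarith
      linarith
    nlinarith [norm_nonneg (z + β • (h' z + φ z)), norm_nonneg z]
  · -- inside the ball
    intro hzV
    have h1 : ‖z + β • (h' z + φ z)‖ ≤ ‖z‖ + β * ‖h' z‖ + β * ‖φ z‖ := by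
      calc ‖z + β • (h' z + φ z)‖ ≤ ‖z‖ + ‖β • (h' z + φ z)‖ := norm_add_le _ _
        _ = ‖z‖ + β * ‖h' z + φ z‖ := by rw [norm_smul, Real.norm_eq_abs, abs_of_pos hβ0]
        _ ≤ ‖z‖ + β * (‖h' z‖ + ‖φ z‖) := by
            have := norm_add_le (h' z) (φ z)
            nlinarith
        _ = ‖z‖ + β * ‖h' z‖ + β * ‖φ z‖ := by ring
    have h2 : ‖z + β • (h' z + φ z)‖ ≤ ‖z‖ + γ / (8 * M ^ 2) * ‖h' z‖ + γ * c / (8 * M ^ 2) := by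
      have e1 : β * ‖h' z‖ ≤ γ / (8 * M ^ 2) * ‖h' z‖ :=
        mul_le_mul_of_nonneg_right hβ2 (norm_nonneg _)
      have e2 : β * ‖φ z‖ ≤ γ * c / (8 * M ^ 2) := by
        have e3 : β * ‖φ z‖ ≤ (γ / (8 * M ^ 2)) * c :=
          mul_le_mul hβ2 (hφ z) (norm_nonneg _) (by positivity)
        calc β * ‖φ z‖ ≤ (γ / (8 * M ^ 2)) * c := e3
          _ = γ * c / (8 * M ^ 2) := by ring
      linarith
    have hcont : Continuous fun v : EuclideanSpace ℝ (Fin p) =>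
        ‖v‖ + γ / (8 * M ^ 2) * ‖h' v‖ := by
      have hlipc : Continuous h' := by
        refine (LipschitzWith.of_dist_le_mul (K := ⟨M, hM.le⟩) ?_).continuous
        intro x y
        rw [dist_eq_norm, dist_eq_norm]; exact hlip x y
      fun_prop
    have hbdd : BddAbove ((fun v : EuclideanSpace ℝ (Fin p) =>
        ‖v‖ + γ / (8 * M ^ 2) * ‖h' v‖) '' Metric.closedBall 0 R₀) :=
      ((isCompact_closedBall (0:EuclideanSpace ℝ (Fin p)) R₀).image hcont).bddAbove
    have hle := le_csSup hbdd (Set.mem_image_of_mem _ hzV)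
    linarith
end
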